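/- Let R be a commutative Artinian ring with identity. Then the comaximal graph of R, i.e., the simple graph whose vertices are the non-unit elements of R not belonging to the Jacobson radical J(R), with distinct vertices x and y adjacent if and only if Rx + Ry = R, is a complemented graph, and consequently a uniquely complemented graph. -/

import Mathlib

namespace CG

variable (R : Type*) [CommRing R]

variable {R} in
/-- Vertices of the comaximal graph of `R`: non-unit elements of `R` not belonging
to the Jacobson radical `J(R)`. -/
def IsVertex (x : R) : Prop :=
  ¬ IsUnit x ∧ x ∉ (⊥ : Ideal R).jacobson

variable {R} in
/-- Adjacency in the comaximal graph: distinct vertices `x`, `y` with `Rx + Ry = R`. -/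
def Adj (x y : R) : Prop :=
  x ≠ y ∧ IsVertex x ∧ IsVertex y ∧
    Ideal.span ({x} : Set R) ⊔ Ideal.span ({y} : Set R) = ⊤

variable {R} in
/-- `y` is a complement of `x`: they are adjacent and no vertex is adjacent to both. -/
def IsComplementOf (x y : R) : Prop :=
  Adj x y ∧ ∀ c : R, ¬ (Adj c x ∧ Adj c y)

/-- The comaximal graph of `R` is complemented. -/
def Complemented : Prop :=
  ∀ x : R, IsVertex x → ∃ y : R, IsComplementOf x y

/-- The comaximal graph of `R` is uniquely complemented. -/
def UniquelyComplemented : Prop :=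
  Complemented R ∧
    ∀ a b c : R, IsComplementOf a b → IsComplementOf a c →
      ∀ x : R, (Adj x b ↔ Adj x c)

end CG

section Aux

variable {R : Type*} [CommRing R]

lemma mem_jacobson_bot_iff {x : R} :
    x ∈ (⊥ : Ideal R).jacobson ↔ ∀ m : Ideal R, m.IsMaximal → x ∈ m := by
  simp only [Ideal.jacobson, Ideal.mem_sInf, Set.mem_setOf_eq]
  constructor
  · intro h m hm; exact h ⟨bot_le, hm⟩
  · intro h J hJ; exact h J hJ.2

lemma notUnit_iff_exists_max {x : R} :
    ¬ IsUnit x ↔ ∃ m : Ideal R, m.IsMaximal ∧ x ∈ m := by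
  constructor
  · intro hx
    obtain ⟨m, hm, hle⟩ := Ideal.exists_le_maximal (Ideal.span {x})
      (fun h => hx (Ideal.span_singleton_eq_top.mp h))
    exact ⟨m, hm, hle (Ideal.mem_span_singleton_self x)⟩
  · rintro ⟨m, hm, hxm⟩ hu
    exact hm.ne_top (Ideal.eq_top_of_isUnit_mem _ hxm hu)

lemma comax_iff {x y : R} :
    Ideal.span ({x} : Set R) ⊔ Ideal.span ({y} : Set R) = ⊤ ↔
      ∀ m : Ideal R, m.IsMaximal → ¬ (x ∈ m ∧ y ∈ m) := by
  constructor
  · rintro h m hm ⟨hx, hy⟩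
    refine hm.ne_top (top_le_iff.mp ?_)
    rw [← h]
    exact sup_le ((Ideal.span_singleton_le_iff_mem m).mpr hx)
      ((Ideal.span_singleton_le_iff_mem m).mpr hy)
  · intro h
    by_contra hne
    obtain ⟨m, hm, hle⟩ := Ideal.exists_le_maximal _ hne
    exact h m hm ⟨(le_sup_left.trans hle) (Ideal.mem_span_singleton_self x),
      (le_sup_right.trans hle) (Ideal.mem_span_singleton_self y)⟩

variable [IsArtinianRing R]

set_option maxHeartbeats 1000000 in
lemma exists_selector (S : Ideal R → Prop) :
    ∃ y : R, ∀ m : Ideal R, m.IsMaximal → (y ∈ m ↔ S m) := by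
  have hfin : Finite {I : Ideal R | I.IsMaximal} :=
    (IsArtinianRing.setOfPred_isMaximal_finite R).to_subtype
  have hcop : Pairwise fun i j : {I : Ideal R | I.IsMaximal} =>
      IsCoprime (i.1) (j.1) := fun i j hij =>
    Ideal.isCoprime_iff_sup_eq.mpr <| i.2.coprime_of_ne j.2 (by rwa [Ne, Subtype.coe_inj])
  classical
  obtain ⟨y, hy⟩ := Ideal.pi_quotient_surjective (I := fun i : {I : Ideal R | I.IsMaximal} => i.1) hcop
    (fun i => if S i.1 then 0 else 1)
  refine ⟨y, fun m hm => ?_⟩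
  have h := hy ⟨m, hm⟩
  by_cases hS : S m
  · simp only [hS, if_true] at h
    rw [Ideal.Quotient.eq_zero_iff_mem] at h
    simp [h, hS]
  · simp only [hS, if_false] at h
    have hy' : y ∉ m := fun hmem => hm.ne_top
      (Ideal.Quotient.zero_eq_one_iff.mp ((Ideal.Quotient.eq_zero_iff_mem.mpr hmem) ▸ h))
    simp [hy', hS]

end Aux

section Main

variable {R : Type*} [CommRing R] [IsArtinianRing R]

open CG

lemma vertex_exists_max_mem {x : R} (hx : IsVertex x) :
    ∃ m : Ideal R, m.IsMaximal ∧ x ∈ m := notUnit_iff_exists_max.mp hx.1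

lemma vertex_exists_max_not_mem {x : R} (hx : IsVertex x) :
    ∃ m : Ideal R, m.IsMaximal ∧ x ∉ m := by
  have := hx.2
  rw [mem_jacobson_bot_iff] at this
  push_neg at this
  exact this

lemma complemented_of_artinian : Complemented R := by
  intro x hx
  obtain ⟨y, hy⟩ := exists_selector (R := R) (fun m => x ∉ m)
  obtain ⟨m₀, hm₀, hxm₀⟩ := vertex_exists_max_mem hx
  obtain ⟨m₁, hm₁, hxm₁⟩ := vertex_exists_max_not_mem hx
  have hyv : IsVertex y := by
    constructor
    · exact notUnit_iff_exists_max.mpr ⟨m₁, hm₁, (hy m₁ hm₁).mpr hxm₁⟩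
    · rw [mem_jacobson_bot_iff]
      push_neg
      exact ⟨m₀, hm₀, fun hmem => (hy m₀ hm₀).mp hmem hxm₀⟩
  have hym₀ : y ∉ m₀ := fun hmem => (hy m₀ hm₀).mp hmem hxm₀
  refine ⟨y, ⟨⟨fun hxy => hym₀ (hxy ▸ hxm₀), hx, hyv, ?_⟩, ?_⟩⟩
  · rw [comax_iff]
    rintro m hm ⟨hxm, hym⟩
    exact (hy m hm).mp hym hxm
  · rintro c ⟨hcx, hcy⟩
    obtain ⟨m, hm, hcm⟩ := vertex_exists_max_mem hcx.2.1
    have hxm : x ∉ m := fun hxm => (comax_iff.mp hcx.2.2.2) m hm ⟨hcm, hxm⟩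
    exact (comax_iff.mp hcy.2.2.2) m hm ⟨hcm, (hy m hm).mpr hxm⟩

lemma complement_pattern {a b : R} (h : IsComplementOf a b) :
    ∀ m : Ideal R, m.IsMaximal → (b ∈ m ↔ a ∉ m) := by
  intro m hm
  constructor
  · intro hbm ham
    exact (comax_iff.mp h.1.2.2.2) m hm ⟨ham, hbm⟩
  · intro ham
    by_contra hbm
    obtain ⟨c, hc⟩ := exists_selector (R := R) (fun m' => m' = m)
    have hcm : c ∈ m := (hc m hm).mpr rfl
    obtain ⟨ma, hma, hama⟩ := vertex_exists_max_mem h.1.2.1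
    have hmam : ma ≠ m := fun e => ham (e ▸ hama)
    have hcma : c ∉ ma := fun hmem => hmam ((hc ma hma).mp hmem)
    obtain ⟨mb, hmb, hbmb⟩ := vertex_exists_max_mem h.1.2.2.1
    have hmbm : mb ≠ m := fun e => hbm (e ▸ hbmb)
    have hcmb : c ∉ mb := fun hmem => hmbm ((hc mb hmb).mp hmem)
    have hcv : IsVertex c := by
      constructor
      · exact notUnit_iff_exists_max.mpr ⟨m, hm, hcm⟩
      · rw [mem_jacobson_bot_iff]
        push_neg
        exact ⟨ma, hma, hcma⟩
    refine h.2 c ⟨⟨fun e => hcma (e ▸ hama), hcv, h.1.2.1, ?_⟩,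
      ⟨fun e => hcmb (e ▸ hbmb), hcv, h.1.2.2.1, ?_⟩⟩
    · rw [comax_iff]
      rintro m' hm' ⟨hcm', ham'⟩
      exact ham (((hc m' hm').mp hcm') ▸ ham')
    · rw [comax_iff]
      rintro m' hm' ⟨hcm', hbm'⟩
      exact hbm (((hc m' hm').mp hcm') ▸ hbm')

lemma adj_congr {b c x : R} (hbc : ∀ m : Ideal R, m.IsMaximal → (b ∈ m ↔ c ∈ m))
    (hcv : IsVertex c) (h : Adj x b) : Adj x c := by
  obtain ⟨hxb, hxv, hbv, hcom⟩ := h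
  obtain ⟨m, hm, hxm⟩ := vertex_exists_max_mem hxv
  have hbm : b ∉ m := fun hbm => (comax_iff.mp hcom) m hm ⟨hxm, hbm⟩
  have hcm : c ∉ m := fun hcm => hbm ((hbc m hm).mpr hcm)
  refine ⟨fun e => hcm (e ▸ hxm), hxv, hcv, ?_⟩
  rw [comax_iff]
  rintro m' hm' ⟨hxm', hcm'⟩
  exact (comax_iff.mp hcom) m' hm' ⟨hxm', (hbc m' hm').mpr hcm'⟩

end Main

open CG in
theorem stmt_16 (R : Type*) [CommRing R] [IsArtinianRing R] :
    Complemented R ∧ UniquelyComplemented R := by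
  refine ⟨complemented_of_artinian, complemented_of_artinian, ?_⟩
  intro a b c hab hac x
  have hb := complement_pattern hab
  have hc := complement_pattern hac
  have hbc : ∀ m : Ideal R, m.IsMaximal → (b ∈ m ↔ c ∈ m) :=
    fun m hm => (hb m hm).trans (hc m hm).symm
  exact ⟨adj_congr hbc hac.1.2.2.1, adj_congr (fun m hm => (hbc m hm).symm) hab.1.2.2.1⟩
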